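/- Let (v_1,…,v_d) be a Popescu system on K, M = {v_k, v_k* : 1 ≤ k ≤ d}'' and suppose that the commutant satisfies M' = {x ∈ B(K) : Σ_{k=1}^d v_k x v_k* = x}. Then in any minimal Popescu dilation (H, P, (S_1,…,S_d)) of (v_1,…,v_d), the projection P belongs to the von Neumann algebra {S_k, S_k* : 1 ≤ k ≤ d}'' generated by the Cuntz family. -/

import Mathlib

open ContinuousLinearMap Filter
open scoped ComplexInnerProductSpace ComplexOrder

noncomputable section

/-- The operator `S_I = S_{i₁} ⋯ S_{i_m}` associated to a finite multi-index
(the empty multi-index gives the identity). -/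
def cword {d : ℕ} {H : Type*} [NormedAddCommGroup H] [InnerProductSpace ℂ H]
    (S : Fin d → H →L[ℂ] H) (I : List (Fin d)) : H →L[ℂ] H :=
  (I.map S).prod

/-- A Cuntz family: `Sᵢ* Sⱼ = δᵢⱼ 1` and `∑ₖ Sₖ Sₖ* = 1`. -/
def IsCuntzFamily {d : ℕ} {H : Type*} [NormedAddCommGroup H] [InnerProductSpace ℂ H]
    [CompleteSpace H] (S : Fin d → H →L[ℂ] H) : Prop :=
  (∀ i j : Fin d, adjoint (S i) ∘L S j = if i = j then 1 else 0) ∧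
    ∑ k : Fin d, S k ∘L adjoint (S k) = 1

/-- A Popescu system: `∑ₖ vₖ vₖ* = 1`. -/
def IsPopescuSystem {d : ℕ} {K : Type*} [NormedAddCommGroup K] [InnerProductSpace ℂ K]
    [CompleteSpace K] (v : Fin d → K →L[ℂ] K) : Prop :=
  ∑ k : Fin d, v k ∘L adjoint (v k) = 1

/-- A minimal Popescu dilation of a Popescu system `v` on `K`: `H` contains `K` as a closed
subspace via the isometric embedding `ι` (so `P = ι ∘ ι*` is the orthogonal projection of `H`
onto the copy of `K`), `S` is a Cuntz family leaving the copy of `K` invariant under every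
`Sₖ*` (`P Sₖ* P = Sₖ* P`), the compression of `Sₖ` to `K` is `vₖ`, and the vectors
`S_I ξ`, `ξ ∈ K`, are total in `H`. -/
def IsMinimalDilation {d : ℕ} {K H : Type*}
    [NormedAddCommGroup K] [InnerProductSpace ℂ K] [CompleteSpace K]
    [NormedAddCommGroup H] [InnerProductSpace ℂ H] [CompleteSpace H]
    (v : Fin d → K →L[ℂ] K) (ι : K →L[ℂ] H) (S : Fin d → H →L[ℂ] H) : Prop :=
  IsCuntzFamily S ∧
  adjoint ι ∘L ι = 1 ∧
  (∀ k, (ι ∘L adjoint ι) ∘L adjoint (S k) ∘L (ι ∘L adjoint ι) = adjoint (S k) ∘L (ι ∘L adjoint ι)) ∧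
  (∀ k, adjoint ι ∘L S k ∘L ι = v k) ∧
  Dense ((Submodule.span ℂ {x : H | ∃ (I : List (Fin d)) (ξ : K), x = cword S I (ι ξ)} :
    Submodule ℂ H) : Set H)


set_option linter.unusedSectionVars false
set_option linter.unusedVariables false

section AuxLemmas

variable {d : ℕ} {K H : Type*}
    [NormedAddCommGroup K] [InnerProductSpace ℂ K] [CompleteSpace K]
    [NormedAddCommGroup H] [InnerProductSpace ℂ H] [CompleteSpace H]

lemma cword_nil (S : Fin d → H →L[ℂ] H) : cword S [] = 1 := rfl

lemma cword_cons (S : Fin d → H →L[ℂ] H) (k : Fin d) (I : List (Fin d)) :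
    cword S (k :: I) = S k ∘L cword S I := by
  simp [cword, List.prod_cons, ContinuousLinearMap.mul_def]

lemma adjoint_comm {A B : H →L[ℂ] H} (h : A ∘L B = B ∘L A) :
    adjoint A ∘L adjoint B = adjoint B ∘L adjoint A := by
  rw [← adjoint_comp, ← adjoint_comp, h]

lemma comm_comp {A B T : H →L[ℂ] H} (hA : T ∘L A = A ∘L T) (hB : T ∘L B = B ∘L T) :
    T ∘L (A ∘L B) = (A ∘L B) ∘L T := by
  rw [← ContinuousLinearMap.comp_assoc, hA, ContinuousLinearMap.comp_assoc, hB,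
    ← ContinuousLinearMap.comp_assoc]

lemma comm_adjoint_cword {S : Fin d → H →L[ℂ] H} {T : H →L[ℂ] H}
    (h : ∀ k, T ∘L adjoint (S k) = adjoint (S k) ∘L T) (I : List (Fin d)) :
    T ∘L adjoint (cword S I) = adjoint (cword S I) ∘L T := by
  induction I with
  | nil => ext ξ; simp [cword_nil, ContinuousLinearMap.one_def, adjoint_id]
  | cons k I ih => rw [cword_cons, adjoint_comp]; exact comm_comp ih (h k)

lemma coinv {v : Fin d → K →L[ℂ] K} {ι : K →L[ℂ] H} {S : Fin d → H →L[ℂ] H}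
    (hdil : IsMinimalDilation v ι S) (k : Fin d) :
    adjoint (S k) ∘L ι = ι ∘L adjoint (v k) := by
  obtain ⟨-, hιι, hco, hcomp, -⟩ := hdil
  have h1 : ∀ ξ : K, adjoint ι (ι ξ) = ξ := by
    intro ξ
    have := ContinuousLinearMap.ext_iff.mp hιι ξ
    simpa using this
  ext ξ
  have h2 := ContinuousLinearMap.ext_iff.mp (hco k) (ι ξ)
  simp only [ContinuousLinearMap.comp_apply, h1] at h2
  have h3 : adjoint (v k) ξ = adjoint ι (adjoint (S k) (ι ξ)) := by
    rw [← hcomp k]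
    simp [adjoint_comp, ContinuousLinearMap.comp_apply, adjoint_adjoint]
  simp only [ContinuousLinearMap.comp_apply]
  rw [h3]
  exact h2.symm

lemma adjoint_cword_comp_iota {v : Fin d → K →L[ℂ] K} {ι : K →L[ℂ] H} {S : Fin d → H →L[ℂ] H}
    (hA : ∀ k, adjoint (S k) ∘L ι = ι ∘L adjoint (v k)) (I : List (Fin d)) :
    adjoint (cword S I) ∘L ι = ι ∘L adjoint (cword v I) := by
  induction I with
  | nil => ext ξ; simp [cword_nil, ContinuousLinearMap.one_def, adjoint_id]
  | cons k I ih =>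
      rw [cword_cons, cword_cons, adjoint_comp, adjoint_comp,
        ContinuousLinearMap.comp_assoc, hA k, ← ContinuousLinearMap.comp_assoc, ih,
        ContinuousLinearMap.comp_assoc]

lemma key_comp {v : Fin d → K →L[ℂ] K} {ι : K →L[ℂ] H} {S : Fin d → H →L[ℂ] H}
    (hdil : IsMinimalDilation v ι S) (T : H →L[ℂ] H)
    (hTS' : ∀ k, T ∘L adjoint (S k) = adjoint (S k) ∘L T)
    (hcx : ∀ I : List (Fin d),
      (adjoint ι ∘L (T ∘L ι)) ∘L adjoint (cword v I)
        = adjoint (cword v I) ∘L (adjoint ι ∘L (T ∘L ι))) :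
    T ∘L ι = ι ∘L (adjoint ι ∘L (T ∘L ι)) := by
  set x : K →L[ℂ] K := adjoint ι ∘L (T ∘L ι) with hxdef
  have hA : ∀ k, adjoint (S k) ∘L ι = ι ∘L adjoint (v k) := coinv hdil
  obtain ⟨-, hιι, -, -, hdense⟩ := hdil
  have h1 : ∀ ξ : K, adjoint ι (ι ξ) = ξ := by
    intro ξ; have := ContinuousLinearMap.ext_iff.mp hιι ξ; simpa using this
  have hW : ∀ I, adjoint (cword S I) ∘L ι = ι ∘L adjoint (cword v I) :=
    adjoint_cword_comp_iota hA
  have hTW : ∀ I, T ∘L adjoint (cword S I) = adjoint (cword S I) ∘L T :=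
    comm_adjoint_cword hTS'
  ext ξ
  simp only [ContinuousLinearMap.comp_apply]
  set w : H := T (ι ξ) - ι (x ξ) with hwdef
  have c0 : ∀ ζ : K, adjoint ι (T (ι ζ)) = x ζ := by
    intro ζ; simp [hxdef, ContinuousLinearMap.comp_apply]
  have hgen : ∀ h ∈ {y : H | ∃ (I : List (Fin d)) (η : K), y = cword S I (ι η)},
      ⟪w, h⟫ = 0 := by
    rintro _ ⟨I, η, rfl⟩
    have cW : ∀ z : H, adjoint (cword S I) (T z) = T (adjoint (cword S I) z) := by
      intro z
      have := ContinuousLinearMap.ext_iff.mp (hTW I) z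
      simpa [ContinuousLinearMap.comp_apply] using this.symm
    have cWι : ∀ ζ : K, adjoint (cword S I) (ι ζ) = ι (adjoint (cword v I) ζ) := by
      intro ζ
      have := ContinuousLinearMap.ext_iff.mp (hW I) ζ
      simpa [ContinuousLinearMap.comp_apply] using this
    have hι2 : ∀ a b : K, ⟪ι a, ι b⟫ = ⟪a, b⟫ := by
      intro a b
      rw [← ContinuousLinearMap.adjoint_inner_left, h1]
    have e1 : ⟪T (ι ξ), cword S I (ι η)⟫ = ⟪x (adjoint (cword v I) ξ), η⟫ := by
      rw [← ContinuousLinearMap.adjoint_inner_left, cW, cWι, ← c0,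
        ContinuousLinearMap.adjoint_inner_left (A := ι)]
    have e2 : ⟪ι (x ξ), cword S I (ι η)⟫ = ⟪adjoint (cword v I) (x ξ), η⟫ := by
      rw [← ContinuousLinearMap.adjoint_inner_left, cWι, hι2]
    have e3 : x (adjoint (cword v I) ξ) = adjoint (cword v I) (x ξ) := by
      have := ContinuousLinearMap.ext_iff.mp (hcx I) ξ
      simpa [ContinuousLinearMap.comp_apply, ← hxdef] using this
    rw [hwdef, inner_sub_left, e1, e2, e3, sub_self]
  have hspan : (Submodule.span ℂ
      {y : H | ∃ (I : List (Fin d)) (η : K), y = cword S I (ι η)} : Set H)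
      ⊆ ((innerSL ℂ w).ker : Set H) := by
    intro h hh
    refine (Submodule.span_le.mpr ?_) hh
    intro y hy
    simpa [LinearMap.mem_ker, innerSL_apply_apply] using hgen y hy
  have hwker : w ∈ (innerSL ℂ w).ker := by
    have hclosed : IsClosed ((innerSL ℂ w).ker : Set H) :=
      ContinuousLinearMap.isClosed_ker (innerSL ℂ w)
    exact closure_minimal hspan hclosed (hdense w)
  have hww : ⟪w, w⟫ = 0 := by
    simpa using hwker
  have : w = 0 := inner_self_eq_zero.mp hww
  exact sub_eq_zero.mp (hwdef ▸ this)

end AuxLemmas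

set_option maxHeartbeats 2000000

/-- If the Popescu system `v` on `K` satisfies
`M' = {x : ∑ₖ vₖ x vₖ* = x}` for `M = {vₖ, vₖ*}''`, then in any minimal Popescu dilation
`(H, P, S)` (with `P = ι ∘ ι*`) the projection `P` belongs to `{Sₖ, Sₖ*}''`. -/
theorem proj_mem_cuntz_vN_of_commutant_eq_fixedPoints {d : ℕ} (hd : 2 ≤ d)
    {K H : Type*} [NormedAddCommGroup K] [InnerProductSpace ℂ K] [CompleteSpace K]
    [NormedAddCommGroup H] [InnerProductSpace ℂ H] [CompleteSpace H]
    (v : Fin d → K →L[ℂ] K) (hv : IsPopescuSystem v)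
    (M : Set (K →L[ℂ] K))
    (hM : M = Set.centralizer (Set.centralizer
        (Set.range v ∪ Set.range (fun k => adjoint (v k)))))
    (hMcomm : Set.centralizer M
        = {x : K →L[ℂ] K | (∑ k : Fin d, v k ∘L x ∘L adjoint (v k)) = x})
    (ι : K →L[ℂ] H) (S : Fin d → H →L[ℂ] H) (hdil : IsMinimalDilation v ι S) :
    (ι ∘L adjoint ι) ∈ Set.centralizer (Set.centralizer
        (Set.range S ∪ Set.range (fun k => adjoint (S k)))) := by
  subst hM
  rw [Set.mem_centralizer_iff]
  intro T hT
  rw [Set.mem_centralizer_iff] at hT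
  have hTS : ∀ k, T ∘L S k = S k ∘L T := by
    intro k
    have := hT (S k) (Set.mem_union_left _ ⟨k, rfl⟩)
    simpa [ContinuousLinearMap.mul_def] using this.symm
  have hTS' : ∀ k, T ∘L adjoint (S k) = adjoint (S k) ∘L T := by
    intro k
    have := hT (adjoint (S k)) (Set.mem_union_right _ ⟨k, rfl⟩)
    simpa [ContinuousLinearMap.mul_def] using this.symm
  have hA : ∀ k, adjoint (S k) ∘L ι = ι ∘L adjoint (v k) := coinv hdil
  have hS2 : ∑ k : Fin d, S k ∘L adjoint (S k) = 1 := hdil.1.2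
  set x : K →L[ℂ] K := adjoint ι ∘L (T ∘L ι) with hxdef
  have c0 : ∀ ζ : K, x ζ = adjoint ι (T (ι ζ)) := by
    intro ζ; simp [hxdef, ContinuousLinearMap.comp_apply]
  -- x is a fixed point of the Popescu map
  have hxfix : (∑ k : Fin d, v k ∘L x ∘L adjoint (v k)) = x := by
    ext ξ
    rw [ContinuousLinearMap.sum_apply]
    have hterm : ∀ k : Fin d, (v k ∘L x ∘L adjoint (v k)) ξ
        = adjoint ι ((S k ∘L adjoint (S k)) (T (ι ξ))) := by
      intro k
      simp only [ContinuousLinearMap.comp_apply]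
      have e1 : ι (adjoint (v k) ξ) = adjoint (S k) (ι ξ) := by
        have := ContinuousLinearMap.ext_iff.mp (hA k) ξ
        simpa [ContinuousLinearMap.comp_apply] using this.symm
      have e2 : T (adjoint (S k) (ι ξ)) = adjoint (S k) (T (ι ξ)) := by
        have := ContinuousLinearMap.ext_iff.mp (hTS' k) (ι ξ)
        simpa [ContinuousLinearMap.comp_apply] using this
      have e3 : ∀ z : H, v k (adjoint ι z) = adjoint ι (S k z) := by
        intro z
        have h0 := congrArg adjoint (hA k)
        rw [adjoint_comp, adjoint_comp, adjoint_adjoint, adjoint_adjoint] at h0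
        have h := ContinuousLinearMap.ext_iff.mp h0 z
        simpa [ContinuousLinearMap.comp_apply] using h.symm
      rw [c0, e1, e2, e3]
    calc ∑ k : Fin d, (v k ∘L x ∘L adjoint (v k)) ξ
        = ∑ k : Fin d, adjoint ι ((S k ∘L adjoint (S k)) (T (ι ξ))) :=
          Finset.sum_congr rfl (fun k _ => hterm k)
      _ = adjoint ι (∑ k : Fin d, (S k ∘L adjoint (S k)) (T (ι ξ))) :=
          (map_sum (adjoint ι) _ _).symm
      _ = adjoint ι ((∑ k : Fin d, S k ∘L adjoint (S k)) (T (ι ξ))) := by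
          rw [ContinuousLinearMap.sum_apply]
      _ = adjoint ι (T (ι ξ)) := by rw [hS2]; simp
      _ = x ξ := (c0 ξ).symm
  have hxM : x ∈ Set.centralizer (Set.centralizer (Set.centralizer
      (Set.range v ∪ Set.range (fun k => adjoint (v k))))) := by
    rw [hMcomm]; exact hxfix
  rw [Set.mem_centralizer_iff] at hxM
  -- words belong to M
  have hMsub : (Set.range v ∪ Set.range fun k => adjoint (v k)) ⊆
      Set.centralizer (Set.centralizer
        (Set.range v ∪ Set.range (fun k => adjoint (v k)))) :=
    Set.subset_centralizer_centralizer
  have hword : ∀ I : List (Fin d), cword v I ∈ Set.centralizer (Set.centralizer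
        (Set.range v ∪ Set.range (fun k => adjoint (v k)))) ∧
      adjoint (cword v I) ∈ Set.centralizer (Set.centralizer
        (Set.range v ∪ Set.range (fun k => adjoint (v k)))) := by
    intro I
    induction I with
    | nil =>
        have h1 : cword v ([] : List (Fin d)) = 1 := cword_nil v
        have h2 : adjoint (cword v ([] : List (Fin d))) = 1 := by
          ext ξ; simp [cword_nil, ContinuousLinearMap.one_def, adjoint_id]
        rw [h2, h1]
        exact ⟨Set.one_mem_centralizer, Set.one_mem_centralizer⟩
    | cons k I ih =>
        constructor
        · rw [cword_cons, ← ContinuousLinearMap.mul_def]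
          exact Set.mul_mem_centralizer (hMsub (Set.mem_union_left _ ⟨k, rfl⟩)) ih.1
        · rw [cword_cons, adjoint_comp, ← ContinuousLinearMap.mul_def]
          exact Set.mul_mem_centralizer ih.2 (hMsub (Set.mem_union_right _ ⟨k, rfl⟩))
  have hxc : ∀ I : List (Fin d),
      (adjoint ι ∘L (T ∘L ι)) ∘L adjoint (cword v I)
        = adjoint (cword v I) ∘L (adjoint ι ∘L (T ∘L ι)) := by
    intro I
    rw [← hxdef]
    have h := (hxM _ (hword I).2).symm
    rw [ContinuousLinearMap.mul_def, ContinuousLinearMap.mul_def] at h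
    exact h
  have hT1 : T ∘L ι = ι ∘L x := key_comp hdil T hTS' hxc
  -- now the adjoint
  have hT'S' : ∀ k, adjoint T ∘L adjoint (S k) = adjoint (S k) ∘L adjoint T := by
    intro k
    have := congrArg adjoint (hTS k)
    simpa [adjoint_comp] using this.symm
  have hyx : adjoint ι ∘L (adjoint T ∘L ι) = adjoint x := by
    rw [hxdef, adjoint_comp, adjoint_comp, adjoint_adjoint]
    exact (ContinuousLinearMap.comp_assoc _ _ _).symm
  have hcy : ∀ I : List (Fin d),
      (adjoint ι ∘L (adjoint T ∘L ι)) ∘L adjoint (cword v I)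
        = adjoint (cword v I) ∘L (adjoint ι ∘L (adjoint T ∘L ι)) := by
    intro I
    rw [hyx]
    have hxc' : cword v I ∘L x = x ∘L cword v I := by
      have h := hxM _ (hword I).1
      rw [ContinuousLinearMap.mul_def, ContinuousLinearMap.mul_def] at h
      exact h
    exact adjoint_comm hxc'.symm
  have hT2 : adjoint T ∘L ι = ι ∘L adjoint x := by
    have := key_comp hdil (adjoint T) hT'S' hcy
    rwa [hyx] at this
  have h5 : adjoint ι ∘L T = x ∘L adjoint ι := by
    have := congrArg adjoint hT2
    simpa [adjoint_comp, adjoint_adjoint] using this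
  rw [ContinuousLinearMap.mul_def, ContinuousLinearMap.mul_def]
  calc T ∘L (ι ∘L adjoint ι) = (T ∘L ι) ∘L adjoint ι :=
        (ContinuousLinearMap.comp_assoc _ _ _).symm
    _ = (ι ∘L x) ∘L adjoint ι := by rw [hT1]
    _ = ι ∘L (x ∘L adjoint ι) := ContinuousLinearMap.comp_assoc _ _ _
    _ = ι ∘L (adjoint ι ∘L T) := by rw [h5]
    _ = (ι ∘L adjoint ι) ∘L T := (ContinuousLinearMap.comp_assoc _ _ _).symm
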